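/- For the decomposition of the one-dimensional Fermi-Hubbard Hamiltonian, [H_2, H_1] = v² Σ_{i∈Λ'} Σ_{σ∈{↑,↓}} ( h̃_{i−1,i+1,σ} − h̃_{i,i+2,σ} ). -/

import Mathlib

/-- The hopping term `h_{ijσ} = a_{iσ}† a_{jσ} + a_{jσ}† a_{iσ}`. -/
noncomputable def hop {E : Type*} [NormedAddCommGroup E] [InnerProductSpace ℂ E]
    [CompleteSpace E] {Λ : Type*} (a : Λ → Bool → E →L[ℂ] E) (i j : Λ) (σ : Bool) :
    E →L[ℂ] E :=
  star (a i σ) * a j σ + star (a j σ) * a i σ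

/-- The signed hopping term `h̃_{ijσ} = a_{iσ}† a_{jσ} − a_{jσ}† a_{iσ}`. -/
noncomputable def shop {E : Type*} [NormedAddCommGroup E] [InnerProductSpace ℂ E]
    [CompleteSpace E] {Λ : Type*} (a : Λ → Bool → E →L[ℂ] E) (i j : Λ) (σ : Bool) :
    E →L[ℂ] E :=
  star (a i σ) * a j σ - star (a j σ) * a i σ

/-- The number operator `n_{iσ} = a_{iσ}† a_{iσ}`. -/
noncomputable def num {E : Type*} [NormedAddCommGroup E] [InnerProductSpace ℂ E]
    [CompleteSpace E] {Λ : Type*} (a : Λ → Bool → E →L[ℂ] E) (i : Λ) (σ : Bool) :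
    E →L[ℂ] E :=
  star (a i σ) * a i σ

/-- The "even-odd" kinetic term `H₁ = v Σ_{i∈Λ'} Σ_σ h_{i,i+1,σ}` of the one-dimensional
Fermi-Hubbard Hamiltonian, with `Λ' = {0, 2, …, L−2} ⊂ ℤ/Lℤ` and spin `↑ = true`, `↓ = false`. -/
noncomputable def FH1 {E : Type*} [NormedAddCommGroup E] [InnerProductSpace ℂ E]
    [CompleteSpace E] {L : ℕ} (a : ZMod L → Bool → E →L[ℂ] E) (v : ℝ) : E →L[ℂ] E :=
  (v : ℂ) • ∑ i ∈ Finset.range (L / 2), ∑ σ : Bool,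
    hop a ((2 * i : ℕ) : ZMod L) (((2 * i : ℕ) : ZMod L) + 1) σ

/-- The "odd-even" kinetic term `H₂ = v Σ_{i∈Λ'} Σ_σ h_{i−1,i,σ}`. -/
noncomputable def FH2 {E : Type*} [NormedAddCommGroup E] [InnerProductSpace ℂ E]
    [CompleteSpace E] {L : ℕ} (a : ZMod L → Bool → E →L[ℂ] E) (v : ℝ) : E →L[ℂ] E :=
  (v : ℂ) • ∑ i ∈ Finset.range (L / 2), ∑ σ : Bool,
    hop a (((2 * i : ℕ) : ZMod L) - 1) ((2 * i : ℕ) : ZMod L) σ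

/-- The interaction term `H₃ = u Σ_{i∈Λ'} (n_{i↑}n_{i↓} + n_{i+1,↑}n_{i+1,↓})`. -/
noncomputable def FH3 {E : Type*} [NormedAddCommGroup E] [InnerProductSpace ℂ E]
    [CompleteSpace E] {L : ℕ} (a : ZMod L → Bool → E →L[ℂ] E) (u : ℝ) : E →L[ℂ] E :=
  (u : ℂ) • ∑ i ∈ Finset.range (L / 2),
    (num a ((2 * i : ℕ) : ZMod L) true * num a ((2 * i : ℕ) : ZMod L) false +
      num a (((2 * i : ℕ) : ZMod L) + 1) true * num a (((2 * i : ℕ) : ZMod L) + 1) false)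

section FHaux

set_option linter.unusedSectionVars false

variable {E : Type*} [NormedAddCommGroup E] [InnerProductSpace ℂ E] [CompleteSpace E]
variable {L : ℕ} {a : ZMod L → Bool → E →L[ℂ] E}

lemma FH.sum_lie {ι : Type*} (s : Finset ι) (f : ι → E →L[ℂ] E) (y : E →L[ℂ] E) :
    ⁅∑ i ∈ s, f i, y⁆ = ∑ i ∈ s, ⁅f i, y⁆ := by
  simp [Ring.lie_def, Finset.sum_mul, Finset.mul_sum, Finset.sum_sub_distrib]

lemma FH.lie_sum {ι : Type*} (s : Finset ι) (f : ι → E →L[ℂ] E) (y : E →L[ℂ] E) :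
    ⁅y, ∑ i ∈ s, f i⁆ = ∑ i ∈ s, ⁅y, f i⁆ := by
  simp [Ring.lie_def, Finset.sum_mul, Finset.mul_sum, Finset.sum_sub_distrib]

lemma FH.Tcomm
    (car1 : ∀ (i j : ZMod L) (σ τ : Bool), a i σ * a j τ + a j τ * a i σ = 0)
    (car2 : ∀ (i j : ZMod L) (σ τ : Bool),
      a i σ * star (a j τ) + star (a j τ) * a i σ = if i = j ∧ σ = τ then 1 else 0)
    (i j k l : ZMod L) (σ τ : Bool) :
    ⁅star (a i σ) * a j σ, star (a k τ) * a l τ⁆ =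
      (if j = k ∧ σ = τ then star (a i σ) * a l τ else 0) -
      (if l = i ∧ τ = σ then star (a k τ) * a j σ else 0) := by
  have hAC : star (a i σ) * star (a k τ) + star (a k τ) * star (a i σ) = 0 := by
    have h := congrArg star (car1 k i τ σ)
    simpa [star_add, star_mul] using h
  have key : ∀ A B C D : E →L[ℂ] E,
      A*B*(C*D) - C*D*(A*B) =
        A*((B*C + C*B)*D) - A*(C*(B*D + D*B)) + (A*C + C*A)*(D*B)
          - C*((D*A + A*D)*B) := by
    intro A B C D; noncomm_ring
  rw [Ring.lie_def, key, car2 j k σ τ, car1 j l σ τ, hAC, car2 l i τ σ]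
  split_ifs <;> simp [mul_assoc]

lemma FH.hop_comm
    (car1 : ∀ (i j : ZMod L) (σ τ : Bool), a i σ * a j τ + a j τ * a i σ = 0)
    (car2 : ∀ (i j : ZMod L) (σ τ : Bool),
      a i σ * star (a j τ) + star (a j τ) * a i σ = if i = j ∧ σ = τ then 1 else 0)
    (p q r s : ZMod L) (σ τ : Bool) (hqs : q ≠ s) (hpr : p ≠ r) :
    ⁅hop a p q σ, hop a r s τ⁆ =
      (if q = r ∧ σ = τ then shop a p s τ else 0) +
      (if p = s ∧ σ = τ then shop a q r τ else 0) := by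
  letI : LieRing (E →L[ℂ] E) := LieRing.ofAssociativeRing
  rw [hop, hop, add_lie, lie_add, lie_add,
      FH.Tcomm car1 car2 p q r s σ τ, FH.Tcomm car1 car2 p q s r σ τ,
      FH.Tcomm car1 car2 q p r s σ τ, FH.Tcomm car1 car2 q p s r σ τ]
  by_cases hst : σ = τ
  · subst hst
    simp only [and_true]
    by_cases h1 : q = r
    · subst h1
      by_cases h2 : p = s
      · subst h2
        simp [hqs, hpr, Ne.symm hqs, Ne.symm hpr, shop]
        try abel
      · simp [hqs, hpr, Ne.symm hqs, Ne.symm hpr, h2, Ne.symm h2, shop]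
        abel
    · by_cases h2 : p = s
      · subst h2
        simp [hqs, hpr, Ne.symm hqs, Ne.symm hpr, h1, Ne.symm h1, shop]
        abel
      · simp [hqs, hpr, Ne.symm hqs, Ne.symm hpr, h1, h2, Ne.symm h1, Ne.symm h2]
  · simp [hst, Ne.symm hst]

lemma FH.cast2_inj {M : ℕ} (hLM : L = 2*M) {i j : ℕ} (hi : i < M) (hj : j < M) :
    (((2*i : ℕ) : ZMod L) = ((2*j : ℕ) : ZMod L)) ↔ i = j := by
  rw [ZMod.natCast_eq_natCast_iff]
  subst hLM
  unfold Nat.ModEq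
  rw [Nat.mod_eq_of_lt (by omega), Nat.mod_eq_of_lt (by omega)]
  omega

lemma FH.cast2_shift {M : ℕ} (hLM : L = 2*M) {i j : ℕ} (hi : i < M) (hj : j < M) :
    (((2*i : ℕ) : ZMod L) = ((2*j+2 : ℕ) : ZMod L)) ↔ i = (j+1) % M := by
  rw [ZMod.natCast_eq_natCast_iff]
  subst hLM
  unfold Nat.ModEq
  rw [Nat.mod_eq_of_lt (by omega)]
  by_cases h : j + 1 = M
  · rw [show 2*j+2 = 2*M by omega, Nat.mod_self, h, Nat.mod_self]
    omega
  · rw [Nat.mod_eq_of_lt (by omega), Nat.mod_eq_of_lt (by omega)]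
    omega

lemma FH.parity_ne {M : ℕ} (hLM : L = 2*M) (i j : ℕ) :
    ((2*i : ℕ) : ZMod L) ≠ ((2*j+1 : ℕ) : ZMod L) := by
  rw [Ne, ZMod.natCast_eq_natCast_iff]
  intro h
  have h2 : (2:ℕ) ∣ L := ⟨M, hLM⟩
  have h3 := h.of_dvd h2
  unfold Nat.ModEq at h3
  omega

lemma FH.pair
    (car1 : ∀ (i j : ZMod L) (σ τ : Bool), a i σ * a j τ + a j τ * a i σ = 0)
    (car2 : ∀ (i j : ZMod L) (σ τ : Bool),
      a i σ * star (a j τ) + star (a j τ) * a i σ = if i = j ∧ σ = τ then 1 else 0)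
    {M : ℕ} (hLM : L = 2*M) {i j : ℕ} (hi : i < M) (hj : j < M) (σ τ : Bool) :
    ⁅hop a (((2*i : ℕ) : ZMod L) - 1) ((2*i : ℕ) : ZMod L) σ,
      hop a ((2*j : ℕ) : ZMod L) (((2*j : ℕ) : ZMod L) + 1) τ⁆ =
    (if i = j ∧ σ = τ then
        shop a (((2*j:ℕ):ZMod L) - 1) (((2*j:ℕ):ZMod L) + 1) τ else 0)
    + (if i = (j+1) % M ∧ σ = τ then
        -(shop a ((2*j:ℕ):ZMod L) (((2*j:ℕ):ZMod L) + 2) τ) else 0) := by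
  have c1 : (((2*j:ℕ):ZMod L) + 1) = ((2*j+1 : ℕ) : ZMod L) := by push_cast; ring
  have c2 : (((2*j:ℕ):ZMod L) + 2) = ((2*j+2 : ℕ) : ZMod L) := by push_cast; ring
  have hqs : ((2*i:ℕ):ZMod L) ≠ ((2*j:ℕ):ZMod L) + 1 := by
    rw [c1]; exact FH.parity_ne hLM i j
  have hpr : ((2*i:ℕ):ZMod L) - 1 ≠ ((2*j:ℕ):ZMod L) := by
    rw [Ne, sub_eq_iff_eq_add]; exact hqs
  rw [FH.hop_comm car1 car2 _ _ _ _ σ τ hqs hpr]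
  have hcond : (((2*i:ℕ):ZMod L) - 1 = ((2*j:ℕ):ZMod L) + 1) ↔ i = (j+1) % M := by
    rw [sub_eq_iff_eq_add, show ((2*j:ℕ):ZMod L) + 1 + 1 = ((2*j+2:ℕ):ZMod L) by
      push_cast; ring]
    exact FH.cast2_shift hLM hi hj
  congr 1
  · by_cases h : i = j
    · subst h; simp
    · rw [if_neg (fun hc => h ((FH.cast2_inj hLM hi hj).mp hc.1)),
        if_neg (fun hc => h hc.1)]
  · by_cases h : i = (j+1) % M ∧ σ = τ
    · obtain ⟨h1, h2⟩ := h
      have hsite : ((2*i:ℕ):ZMod L) = ((2*j:ℕ):ZMod L) + 2 := by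
        rw [c2]; exact (FH.cast2_shift hLM hi hj).mpr h1
      rw [if_pos ⟨hcond.mpr h1, h2⟩, if_pos ⟨h1, h2⟩, hsite]
      simp [shop]
      try abel
    · rw [if_neg (fun hc => h ⟨hcond.mp hc.1, hc.2⟩), if_neg h]

lemma FH.collapse {α : Type*} [AddCommMonoid α] {M j c : ℕ} (hj : j < M) (hc : c < M)
    (τ : Bool) (X Z : α) :
    ∑ i ∈ Finset.range M, ∑ σ : Bool,
      ((if i = j ∧ σ = τ then X else 0) + (if i = c ∧ σ = τ then Z else 0)) = X + Z := by
  have key : ∀ i, (∑ σ : Bool, ((if i = j ∧ σ = τ then X else 0)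
      + (if i = c ∧ σ = τ then Z else 0)))
      = (if i = j then X else 0) + (if i = c then Z else 0) := by
    intro i
    rw [Finset.sum_add_distrib]
    congr 1
    · by_cases hij : i = j <;> simp [hij, Fintype.sum_ite_eq']
    · by_cases hic : i = c <;> simp [hic, Fintype.sum_ite_eq']
  rw [Finset.sum_congr rfl fun i _ => key i, Finset.sum_add_distrib,
    Finset.sum_ite_eq' (Finset.range M) j, Finset.sum_ite_eq' (Finset.range M) c]
  simp [hj, hc]

lemma FH.swap4 {β : Type*} [AddCommMonoid β] (M : ℕ) (G : ℕ → Bool → ℕ → Bool → β) :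
    (∑ i ∈ Finset.range M, ∑ σ : Bool, ∑ j ∈ Finset.range M, ∑ τ : Bool, G i σ j τ)
    = ∑ j ∈ Finset.range M, ∑ τ : Bool, ∑ i ∈ Finset.range M, ∑ σ : Bool, G i σ j τ := by
  calc (∑ i ∈ Finset.range M, ∑ σ : Bool, ∑ j ∈ Finset.range M, ∑ τ : Bool, G i σ j τ)
      = ∑ i ∈ Finset.range M, ∑ j ∈ Finset.range M, ∑ σ : Bool, ∑ τ : Bool, G i σ j τ :=
        Finset.sum_congr rfl fun i _ => Finset.sum_comm
    _ = ∑ j ∈ Finset.range M, ∑ i ∈ Finset.range M, ∑ σ : Bool, ∑ τ : Bool, G i σ j τ :=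
        Finset.sum_comm
    _ = ∑ j ∈ Finset.range M, ∑ i ∈ Finset.range M, ∑ τ : Bool, ∑ σ : Bool, G i σ j τ :=
        Finset.sum_congr rfl fun j _ => Finset.sum_congr rfl fun i _ => Finset.sum_comm
    _ = ∑ j ∈ Finset.range M, ∑ τ : Bool, ∑ i ∈ Finset.range M, ∑ σ : Bool, G i σ j τ :=
        Finset.sum_congr rfl fun j _ => Finset.sum_comm

end FHaux

/-- **Commutator of the two kinetic terms of the 1D Fermi-Hubbard Hamiltonian:**
`[H₂, H₁] = v² Σ_{i∈Λ'} Σ_σ (h̃_{i−1,i+1,σ} − h̃_{i,i+2,σ})`. -/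
theorem comm_FH2_FH1
    {E : Type*} [NormedAddCommGroup E] [InnerProductSpace ℂ E] [CompleteSpace E]
    {L : ℕ} (hL : Even L) (hL6 : 6 ≤ L)
    (a : ZMod L → Bool → E →L[ℂ] E)
    (car1 : ∀ (i j : ZMod L) (σ τ : Bool), a i σ * a j τ + a j τ * a i σ = 0)
    (car2 : ∀ (i j : ZMod L) (σ τ : Bool),
      a i σ * star (a j τ) + star (a j τ) * a i σ = if i = j ∧ σ = τ then 1 else 0)
    (v u : ℝ) :
    ⁅FH2 a v, FH1 a v⁆
      = ((v : ℂ) ^ 2) • ∑ i ∈ Finset.range (L / 2), ∑ σ : Bool,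
          (shop a (((2 * i : ℕ) : ZMod L) - 1) (((2 * i : ℕ) : ZMod L) + 1) σ -
            shop a ((2 * i : ℕ) : ZMod L) (((2 * i : ℕ) : ZMod L) + 2) σ) := by
  obtain ⟨m, hm⟩ := hL
  have hLM : L = 2 * m := by omega
  have hL2 : L / 2 = m := by omega
  have main : (∑ j ∈ Finset.range m, ∑ τ : Bool, ∑ i ∈ Finset.range m, ∑ σ : Bool,
      ⁅hop a (((2 * i : ℕ) : ZMod L) - 1) ((2 * i : ℕ) : ZMod L) σ,
        hop a ((2 * j : ℕ) : ZMod L) (((2 * j : ℕ) : ZMod L) + 1) τ⁆)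
      = ∑ j ∈ Finset.range m, ∑ τ : Bool,
          (shop a (((2 * j : ℕ) : ZMod L) - 1) (((2 * j : ℕ) : ZMod L) + 1) τ -
            shop a ((2 * j : ℕ) : ZMod L) (((2 * j : ℕ) : ZMod L) + 2) τ) := by
    refine Finset.sum_congr rfl fun j hj => Finset.sum_congr rfl fun τ _ => ?_
    rw [show (∑ i ∈ Finset.range m, ∑ σ : Bool,
        ⁅hop a (((2 * i : ℕ) : ZMod L) - 1) ((2 * i : ℕ) : ZMod L) σ,
          hop a ((2 * j : ℕ) : ZMod L) (((2 * j : ℕ) : ZMod L) + 1) τ⁆)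
        = ∑ i ∈ Finset.range m, ∑ σ : Bool,
            ((if i = j ∧ σ = τ then
                shop a (((2*j:ℕ):ZMod L) - 1) (((2*j:ℕ):ZMod L) + 1) τ else 0)
            + (if i = (j+1) % m ∧ σ = τ then
                -(shop a ((2*j:ℕ):ZMod L) (((2*j:ℕ):ZMod L) + 2) τ) else 0)) from
      Finset.sum_congr rfl fun i hi => Finset.sum_congr rfl fun σ _ =>
        FH.pair car1 car2 hLM (Finset.mem_range.mp hi) (Finset.mem_range.mp hj) σ τ]
    rw [FH.collapse (Finset.mem_range.mp hj) (Nat.mod_lt _ (by omega : 0 < m))]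
    abel
  letI : LieRing (E →L[ℂ] E) := LieRing.ofAssociativeRing
  letI : LieAlgebra ℂ (E →L[ℂ] E) := LieAlgebra.ofAssociativeAlgebra
  rw [FH2, FH1, hL2, smul_lie, lie_smul, smul_smul]
  simp only [FH.sum_lie, FH.lie_sum]
  rw [main, ← sq]
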